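/- Let λ : S → T be a length function and μ : S → U a map satisfying the axioms (M1)-(M3) of the Gabriel-Roiter measure. Then for all x, y ∈ S: μ(x) = μ(y) if and only if max_{x'<x} μ(x') = max_{y'<y} μ(y') and λ(x) = λ(y) (where the maxima exist in U, with the convention that both maxima over empty sets are considered equal). -/
import Mathlib


def IsLengthFunction {S T : Type*} [PartialOrder S] [PartialOrder T] (l : S → T) : Prop :=
  (∀ x y : S, x < y → l x < l y) ∧
  (∀ x y : S, l x ≤ l y ∨ l y ≤ l x) ∧
  (∀ x : S, {t : T | ∃ x' ≤ x, l x' = t}.Finite)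

/-- The axioms (M1)-(M3) characterizing the Gabriel-Roiter measure associated to a
length function `l` on a poset `S`. -/
def SatisfiesGRAxioms {S T U : Type*} [PartialOrder S] [PartialOrder T] [PartialOrder U]
    (l : S → T) (μ : S → U) : Prop :=
  (∀ x y : S, x ≤ y → μ x ≤ μ y) ∧
  (∀ x y : S, μ x = μ y → l x = l y) ∧
  (∀ x y : S, (∀ x' < x, μ x' < μ y) → l y ≤ l x → μ x ≤ μ y)

/-- For `μ` satisfying (M1)-(M3): `μ(x) = μ(y)` iff `max_{x'<x} μ(x') = max_{y'<y} μ(y')`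
and `l(x) = l(y)`. The equality of the maxima (with empty maxima considered equal) is
expressed by mutual cofinality of the sets of values `{μ x' | x' < x}` and
`{μ y' | y' < y}`, which form finite chains. -/
theorem grAxioms_eq_iff {S T U : Type*} [PartialOrder S] [PartialOrder T]
    [PartialOrder U] (l : S → T) (hl : IsLengthFunction l)
    (μ : S → U) (hμ : SatisfiesGRAxioms l μ) :
    ∀ x y : S, μ x = μ y ↔
      (((∀ x' < x, ∃ y' < y, μ x' ≤ μ y') ∧ (∀ y' < y, ∃ x' < x, μ y' ≤ μ x')) ∧
        l x = l y) := by
  obtain ⟨hL1, hL2, hL3⟩ := hl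
  obtain ⟨hM1, hM2, hM3⟩ := hμ
  -- cardinality of l-values below a
  set c : S → ℕ := fun a => (hL3 a).toFinset.card with hc
  have hdesc : ∀ a' a : S, a' < a → c a' < c a := by
    intro a' a h
    apply Finset.card_lt_card
    constructor
    · intro t ht
      simp only [Set.Finite.mem_toFinset, Set.mem_setOf_eq] at *
      obtain ⟨x'', hx'', rfl⟩ := ht
      exact ⟨x'', le_trans hx'' h.le, rfl⟩
    · intro hsub
      have hla : l a ∈ (hL3 a).toFinset := by
        simp only [Set.Finite.mem_toFinset, Set.mem_setOf_eq]
        exact ⟨a, le_rfl, rfl⟩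
      have := hsub hla
      simp only [Set.Finite.mem_toFinset, Set.mem_setOf_eq] at this
      obtain ⟨x'', hx'', heq⟩ := this
      have hlt : l x'' < l a := by
        rcases lt_or_eq_of_le hx'' with h'|h'
        · exact lt_trans (hL1 _ _ h') (hL1 _ _ h)
        · rw [h']; exact hL1 _ _ h
      exact absurd heq hlt.ne
  -- total comparability of μ values
  have comp : ∀ a b : S, μ a ≤ μ b ∨ μ b ≤ μ a := by
    have main : ∀ n : ℕ, ∀ a b : S, c a + c b ≤ n → μ a ≤ μ b ∨ μ b ≤ μ a := by
      intro n
      induction n using Nat.strong_induction_on with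
      | _ n ih =>
        intro a b hn
        rcases hL2 b a with h|h
        · by_cases hex : ∃ a' < a, μ b ≤ μ a'
          · obtain ⟨a', ha', hba'⟩ := hex
            exact Or.inr (le_trans hba' (hM1 _ _ ha'.le))
          · push_neg at hex
            left
            apply hM3 a b _ h
            intro a' ha'
            have hcomp : μ a' ≤ μ b ∨ μ b ≤ μ a' := by
              refine ih (c a' + c b) (lt_of_lt_of_le ?_ hn) a' b le_rfl
              exact Nat.add_lt_add_right (hdesc a' a ha') _
            rcases hcomp with h'|h'
            · exact lt_of_le_of_ne h' (fun he => hex a' ha' (he ▸ le_rfl))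
            · exact absurd h' (hex a' ha')
        · by_cases hex : ∃ b' < b, μ a ≤ μ b'
          · obtain ⟨b', hb', hab'⟩ := hex
            exact Or.inl (le_trans hab' (hM1 _ _ hb'.le))
          · push_neg at hex
            right
            apply hM3 b a _ h
            intro b' hb'
            have hcomp : μ b' ≤ μ a ∨ μ a ≤ μ b' := by
              refine (ih (c a + c b') (lt_of_lt_of_le ?_ hn) a b' le_rfl).symm
              exact Nat.add_lt_add_left (hdesc b' b hb') _
            rcases hcomp with h'|h'
            · exact lt_of_le_of_ne h' (fun he => hex b' hb' (he ▸ le_rfl))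
            · exact absurd h' (hex b' hb')
    exact fun a b => main (c a + c b) a b le_rfl
  intro x y
  constructor
  · intro hxy
    have hlxy : l x = l y := hM2 _ _ hxy
    have cof : ∀ p q a : S, μ p = μ q → l p = l q → a < p →
        (∀ b < q, ¬ μ a ≤ μ b) → False := by
      intro p q a hμeq hleq ha hno
      have hyb : μ q ≤ μ a := by
        apply hM3 q a
        · intro y' hy'
          rcases comp y' a with h|h
          · exact lt_of_le_of_ne h (fun he => hno y' hy' (he ▸ le_rfl))
          · exact absurd h (hno y' hy')
        · exact le_of_lt (lt_of_lt_of_le (hL1 _ _ ha) hleq.le)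
      have hax : μ a ≤ μ p := hM1 _ _ ha.le
      have : μ a = μ p := le_antisymm hax (hμeq ▸ hyb)
      have : l a = l p := hM2 _ _ this
      exact absurd this (hL1 _ _ ha).ne
    refine ⟨⟨?_, ?_⟩, hlxy⟩
    · intro x' hx'
      by_contra hno
      push_neg at hno
      exact cof x y x' hxy hlxy hx' hno
    · intro y' hy'
      by_contra hno
      push_neg at hno
      exact cof y x y' hxy.symm hlxy.symm hy' hno
  · rintro ⟨⟨hxy, hyx⟩, hlxy⟩
    have step : ∀ a b : S, (∀ a' < a, ∃ b' < b, μ a' ≤ μ b') → l a = l b → μ a ≤ μ b := by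
      intro a b hcof hleq
      apply hM3 a b _ hleq.ge
      intro a' ha'
      obtain ⟨b', hb', hab'⟩ := hcof a' ha'
      have h1 : μ a' ≤ μ b := le_trans hab' (hM1 _ _ hb'.le)
      refine lt_of_le_of_ne h1 (fun he => ?_)
      have : l a' = l b := hM2 _ _ he
      exact absurd (this.trans hleq.symm) (hL1 _ _ ha').ne
    exact le_antisymm (step x y hxy hlxy) (step y x hyx hlxy.symm)
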